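/- Let P be a polygonal curve in ℝ^d, let λ ≥ 0, Δ ≥ 0 and s ∈ [0,1]. Then there exists a point p* ∈ ℝ^d such that L_{λ,Δ}(P,s) is contained in the closed ball of radius 5Δ centered at p*. -/

import Mathlib

open Set Metric Function

noncomputable section

/-- Euclidean space ℝ^d. -/
abbrev Euc (d : ℕ) := EuclideanSpace ℝ (Fin d)

/-- The polygonal curve (parametrized over `[0,1]`) obtained by concatenating the
segments between consecutive vertices `p 0, p 1, …, p n`. -/
def curveMap {d n : ℕ} (p : Fin (n + 1) → Euc d) (t : ℝ) : Euc d :=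
  if h : n = 0 then p 0
  else
    (1 - (t * n - (min ⌊t * (n : ℝ)⌋₊ (n - 1) : ℕ))) • p ⟨min ⌊t * (n : ℝ)⌋₊ (n - 1), by omega⟩
      + (t * n - (min ⌊t * (n : ℝ)⌋₊ (n - 1) : ℕ)) • p ⟨min ⌊t * (n : ℝ)⌋₊ (n - 1) + 1, by omega⟩

/-- A reparametrization: a continuous non-decreasing surjection of `[0,1]` onto itself. -/
def IsRepar (f : ℝ → ℝ) : Prop :=
  ContinuousOn f (Icc 0 1) ∧ MonotoneOn f (Icc 0 1) ∧ f '' Icc 0 1 = Icc 0 1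

/-- The (continuous) Fréchet distance between two curves `[0,1] → ℝ^d`. -/
def frechetDist {d : ℕ} (P Q : ℝ → Euc d) : ℝ :=
  sInf { r : ℝ | ∃ f g : ℝ → ℝ, IsRepar f ∧ IsRepar g ∧
    ∀ t ∈ Icc (0 : ℝ) 1, dist (P (f t)) (Q (g t)) ≤ r }

/-- The edge (segment curve) from `a` to `b`, parametrized over `[0,1]`. -/
def seg {d : ℕ} (a b : Euc d) (t : ℝ) : Euc d := (1 - t) • a + t • b

/-- The subcurve `P[s,t]` of `P`, reparametrized over `[0,1]`. -/
def subcurve {d : ℕ} (P : ℝ → Euc d) (s t : ℝ) (u : ℝ) : Euc d := P (s + u * (t - s))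

/-- All edge lengths of the polygonal curve with vertices `p` are at most `Λ`. -/
def EdgeLenLe {d n : ℕ} (p : Fin (n + 1) → Euc d) (Λ : ℝ) : Prop :=
  ∀ i : Fin n, dist (p i.castSucc) (p i.succ) ≤ Λ

/-- The vertices `p` define a `(μ,ε)`-curve: each edge length is a non-negative integer
multiple of `ε` and is at most `μ·ε`. -/
def IsMuEpsEdges {d n : ℕ} (p : Fin (n + 1) → Euc d) (μ : ℕ) (ε : ℝ) : Prop :=
  ∀ i : Fin n, (∃ m : ℕ, dist (p i.castSucc) (p i.succ) = m * ε) ∧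
    dist (p i.castSucc) (p i.succ) ≤ μ * ε

/-- The `Δ`-neighbourhood of a set `A ⊆ ℝ^d`. -/
def nbhd {d : ℕ} (A : Set (Euc d)) (Δ : ℝ) : Set (Euc d) :=
  { x | ∃ a ∈ A, dist x a ≤ Δ }

/-- The locus `L_{λ,Δ}(P,s)` of endpoints of edges of length `λ` that are within Fréchet
distance `Δ` of some subcurve of `P` starting at parameter `s`. -/
def locusStart {d n : ℕ} (P : Fin (n + 1) → Euc d) (lam Δ s : ℝ) : Set (Euc d) :=
  { q | ∃ p : Euc d, ∃ t ∈ Icc s 1, dist p q = lam ∧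
      frechetDist (subcurve (curveMap P) s t) (seg p q) ≤ Δ }

/-- The locus `𝓛_{λ,Δ}(P,p)` of endpoints of edges of length `λ` starting at `p` that are
within Fréchet distance `Δ` of some subcurve of `P`. -/
def locusPoint {d n : ℕ} (P : Fin (n + 1) → Euc d) (lam Δ : ℝ) (p : Euc d) : Set (Euc d) :=
  { q | dist p q = lam ∧ ∃ s t : ℝ, 0 ≤ s ∧ s ≤ t ∧ t ≤ 1 ∧
      frechetDist (subcurve (curveMap P) s t) (seg p q) ≤ Δ }

-- === auxiliary lemmas ===

lemma repar_mem {f : ℝ → ℝ} (hf : IsRepar f) {x : ℝ} (hx : x ∈ Icc (0:ℝ) 1) :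
    f x ∈ Icc (0:ℝ) 1 := hf.2.2 ▸ mem_image_of_mem f hx

lemma repar_zero {f : ℝ → ℝ} (hf : IsRepar f) : f 0 = 0 := by
  obtain ⟨hc, hm, him⟩ := hf
  have h0 : (0:ℝ) ∈ f '' Icc 0 1 := by rw [him]; exact ⟨le_refl 0, zero_le_one⟩
  obtain ⟨x, hx, hfx⟩ := h0
  have h1 : f 0 ∈ Icc (0:ℝ) 1 := repar_mem ⟨hc, hm, him⟩ ⟨le_refl 0, zero_le_one⟩
  have h2 : f 0 ≤ f x := hm ⟨le_refl 0, zero_le_one⟩ hx hx.1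
  rw [hfx] at h2
  linarith [h1.1]

lemma repar_one {f : ℝ → ℝ} (hf : IsRepar f) : f 1 = 1 := by
  obtain ⟨hc, hm, him⟩ := hf
  have h0 : (1:ℝ) ∈ f '' Icc 0 1 := by rw [him]; exact ⟨zero_le_one, le_refl 1⟩
  obtain ⟨x, hx, hfx⟩ := h0
  have h1 : f 1 ∈ Icc (0:ℝ) 1 := repar_mem ⟨hc, hm, him⟩ ⟨zero_le_one, le_refl 1⟩
  have h2 : f x ≤ f 1 := hm hx ⟨zero_le_one, le_refl 1⟩ hx.2
  rw [hfx] at h2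
  linarith [h1.2]

lemma isRepar_id : IsRepar (id : ℝ → ℝ) :=
  ⟨continuous_id.continuousOn, (monotone_id).monotoneOn _, image_id _⟩

lemma exists_curve_bound {d n : ℕ} (P : Fin (n+1) → Euc d) :
    ∃ C : ℝ, 0 ≤ C ∧ ∀ t ∈ Icc (0:ℝ) 1, ‖curveMap P t‖ ≤ C := by
  obtain ⟨M, hM⟩ : ∃ M : ℝ, ∀ i, ‖P i‖ ≤ M :=
    ⟨Finset.univ.sup' ⟨0, Finset.mem_univ 0⟩ fun i => ‖P i‖,
     fun i => Finset.le_sup' (fun i => ‖P i‖) (Finset.mem_univ i)⟩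
  have hM0 : 0 ≤ M := le_trans (norm_nonneg _) (hM 0)
  have hcoef : (1:ℝ) ≤ 1 + 4*(n:ℝ) := le_add_of_nonneg_right (by positivity)
  refine ⟨(1 + 4*(n:ℝ)) * M, by positivity, ?_⟩
  intro t ht
  by_cases hn : n = 0
  · rw [curveMap, dif_pos hn]
    nlinarith [hM 0]
  · rw [curveMap, dif_neg hn]
    set j := min ⌊t*(n:ℝ)⌋₊ (n-1) with hj
    set a := t*(n:ℝ) - (j:ℝ) with ha
    have hjn : (j:ℝ) ≤ n := by
      have : j ≤ n := le_trans (min_le_right _ _) (by omega)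
      exact_mod_cast this
    have hj0 : (0:ℝ) ≤ (j:ℝ) := Nat.cast_nonneg j
    have hn0 : (0:ℝ) ≤ (n:ℝ) := Nat.cast_nonneg n
    have htn0 : 0 ≤ t * n := mul_nonneg ht.1 hn0
    have htn1 : t * n ≤ n := by nlinarith [ht.2]
    have haa : |a| ≤ 2*n := by
      rw [abs_le]; constructor <;> [linarith; linarith]
    have h1a : |1 - a| ≤ 1 + 2*(n:ℝ) := by
      rw [abs_le]
      constructor <;> [linarith [abs_le.mp haa]; linarith [abs_le.mp haa]]
    calc ‖(1-a) • P ⟨j, by omega⟩ + a • P ⟨j+1, by omega⟩‖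
        ≤ ‖(1-a) • P ⟨j, by omega⟩‖ + ‖a • P ⟨j+1, by omega⟩‖ := norm_add_le _ _
      _ = |1-a| * ‖P ⟨j, by omega⟩‖ + |a| * ‖P ⟨j+1, by omega⟩‖ := by
          rw [norm_smul, norm_smul, Real.norm_eq_abs, Real.norm_eq_abs]
      _ ≤ (1 + 2*n) * M + (2*n) * M := by
          have g1 := hM (⟨j, by omega⟩ : Fin (n+1))
          have g2 := hM (⟨j+1, by omega⟩ : Fin (n+1))
          nlinarith [abs_nonneg a, abs_nonneg (1-a), norm_nonneg (P (⟨j, by omega⟩ : Fin (n+1))),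
            norm_nonneg (P (⟨j+1, by omega⟩ : Fin (n+1)))]
      _ ≤ (1 + 4*(n:ℝ)) * M := by nlinarith

lemma frechet_set_nonempty {d n : ℕ} (P : Fin (n+1) → Euc d) {s t : ℝ}
    (hs0 : 0 ≤ s) (hst : s ≤ t) (ht1 : t ≤ 1) (p q : Euc d) :
    { r : ℝ | ∃ f g : ℝ → ℝ, IsRepar f ∧ IsRepar g ∧
      ∀ u ∈ Icc (0 : ℝ) 1, dist (subcurve (curveMap P) s t (f u)) (seg p q (g u)) ≤ r }.Nonempty := by
  obtain ⟨C, hC0, hC⟩ := exists_curve_bound P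
  refine ⟨C + (‖p‖ + ‖q‖), id, id, isRepar_id, isRepar_id, ?_⟩
  intro u hu
  simp only [id]
  have harg : s + u * (t - s) ∈ Icc (0:ℝ) 1 := by
    constructor
    · nlinarith [hu.1, hu.2]
    · nlinarith [hu.1, hu.2]
  have h1 : ‖subcurve (curveMap P) s t u‖ ≤ C := hC _ harg
  have h2 : ‖seg p q u‖ ≤ ‖p‖ + ‖q‖ := by
    rw [seg]
    calc ‖(1-u) • p + u • q‖ ≤ ‖(1-u) • p‖ + ‖u • q‖ := norm_add_le _ _
      _ = |1-u| * ‖p‖ + |u| * ‖q‖ := by rw [norm_smul, norm_smul, Real.norm_eq_abs, Real.norm_eq_abs]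
      _ ≤ ‖p‖ + ‖q‖ := by
          have e1 : |1-u| ≤ 1 := by rw [abs_le]; constructor <;> [linarith [hu.1, hu.2]; linarith [hu.1, hu.2]]
          have e2 : |u| ≤ 1 := by rw [abs_le]; constructor <;> [linarith [hu.1]; linarith [hu.2]]
          nlinarith [norm_nonneg p, norm_nonneg q, abs_nonneg u, abs_nonneg (1-u)]
  calc dist (subcurve (curveMap P) s t u) (seg p q u)
      ≤ ‖subcurve (curveMap P) s t u‖ + ‖seg p q u‖ := by
        rw [dist_eq_norm]; exact norm_sub_le _ _
    _ ≤ C + (‖p‖ + ‖q‖) := by linarith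

lemma frechet_start {d n : ℕ} (P : Fin (n+1) → Euc d) {s t : ℝ}
    (hs0 : 0 ≤ s) (hst : s ≤ t) (ht1 : t ≤ 1) (p q : Euc d) :
    dist (curveMap P s) p ≤ frechetDist (subcurve (curveMap P) s t) (seg p q) := by
  unfold frechetDist
  apply le_csInf (frechet_set_nonempty P hs0 hst ht1 p q)
  rintro r ⟨f, g, hf, hg, h⟩
  have := h 0 ⟨le_refl 0, zero_le_one⟩
  rw [repar_zero hf, repar_zero hg] at this
  simpa [subcurve, seg] using this

lemma frechet_end {d n : ℕ} (P : Fin (n+1) → Euc d) {s t : ℝ}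
    (hs0 : 0 ≤ s) (hst : s ≤ t) (ht1 : t ≤ 1) (p q : Euc d) :
    dist (curveMap P t) q ≤ frechetDist (subcurve (curveMap P) s t) (seg p q) := by
  unfold frechetDist
  apply le_csInf (frechet_set_nonempty P hs0 hst ht1 p q)
  rintro r ⟨f, g, hf, hg, h⟩
  have := h 1 ⟨zero_le_one, le_refl 1⟩
  rw [repar_one hf, repar_one hg] at this
  have e1 : s + 1 * (t - s) = t := by ring
  rw [subcurve, seg, e1] at this
  simpa using this

lemma frechet_mid {d n : ℕ} (P : Fin (n+1) → Euc d) {s t : ℝ}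
    (hs0 : 0 ≤ s) (hst : s ≤ t) (ht1 : t ≤ 1) (p q : Euc d) {t' : ℝ}
    (ht' : t' ∈ Icc s t) {ε : ℝ} (hε : 0 < ε) :
    ∃ v ∈ Icc (0:ℝ) 1, dist (curveMap P t') (seg p q v)
      ≤ frechetDist (subcurve (curveMap P) s t) (seg p q) + ε := by
  have hne := frechet_set_nonempty P hs0 hst ht1 p q
  obtain ⟨r, hrS, hr⟩ := exists_lt_of_csInf_lt hne
    (lt_add_of_pos_right (sInf _) hε)
  obtain ⟨f, g, hf, hg, h⟩ := hrS
  have hu : ∃ u ∈ Icc (0:ℝ) 1, s + u * (t - s) = t' := by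
    rcases eq_or_lt_of_le hst with heq | hlt
    · exact ⟨0, ⟨le_refl 0, zero_le_one⟩, by rw [← heq] at ht' ⊢; have : t' = s := le_antisymm ht'.2 ht'.1; simp [this]⟩
    · refine ⟨(t' - s)/(t - s), ⟨div_nonneg (by linarith [ht'.1]) (by linarith), ?_⟩, ?_⟩
      · rw [div_le_one (by linarith)]; linarith [ht'.2]
      · rw [div_mul_cancel₀ _ (ne_of_gt (show (0:ℝ) < t - s by linarith))]; ring
  obtain ⟨u, hu1, hu2⟩ := hu
  have himg : u ∈ f '' Icc 0 1 := by rw [hf.2.2]; exact hu1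
  obtain ⟨x, hx, hfx⟩ := himg
  refine ⟨g x, repar_mem hg hx, ?_⟩
  have hh := h x hx
  rw [hfx] at hh
  rw [subcurve, hu2] at hh
  calc dist (curveMap P t') (seg p q (g x)) ≤ r := hh
    _ ≤ frechetDist (subcurve (curveMap P) s t) (seg p q) + ε := le_of_lt hr

-- segment geometry

lemma seg_sub_left {d : ℕ} (p q : Euc d) (v : ℝ) : seg p q v - p = v • (q - p) := by
  rw [seg]; module

lemma seg_sub_seg {d : ℕ} (p q : Euc d) (v w : ℝ) :
    seg p q v - seg p q w = (v - w) • (q - p) := by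
  rw [seg, seg]; module

lemma dist_seg_left {d : ℕ} (p q : Euc d) {v : ℝ} (hv : 0 ≤ v) :
    dist p (seg p q v) = v * dist p q := by
  have : dist p (seg p q v) = ‖seg p q v - p‖ := by rw [dist_eq_norm, norm_sub_rev]
  rw [this, seg_sub_left, norm_smul, Real.norm_eq_abs, abs_of_nonneg hv,
    ← dist_eq_norm, dist_comm q p]

lemma dist_seg_seg {d : ℕ} (p q : Euc d) (v w : ℝ) :
    dist (seg p q v) (seg p q w) = |v - w| * dist p q := by
  rw [dist_eq_norm, seg_sub_seg, norm_smul, Real.norm_eq_abs, ← dist_eq_norm, dist_comm q p]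

lemma dist_seg_right {d : ℕ} (p q : Euc d) {v : ℝ} (hv : v ≤ 1) :
    dist (seg p q v) q = (1 - v) * dist p q := by
  have h1 : seg p q 1 = q := by rw [seg]; simp
  have := dist_seg_seg p q v 1
  rw [h1] at this
  rw [this, abs_of_nonpos (by linarith), neg_sub]

-- === continuity of curveMap ===

lemma glue_closed {d : ℕ} {f : ℝ → Euc d} {A B : Set ℝ} (hA : IsClosed A) (hB : IsClosed B)
    (ha : ContinuousOn f A) (hb : ContinuousOn f B) : ContinuousOn f (A ∪ B) := by
  intro x hx
  have h1 : ContinuousWithinAt f A x := by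
    by_cases h : x ∈ A
    · exact ha x h
    · exact continuousWithinAt_of_notMem_closure (by rwa [hA.closure_eq])
  have h2 : ContinuousWithinAt f B x := by
    by_cases h : x ∈ B
    · exact hb x h
    · exact continuousWithinAt_of_notMem_closure (by rwa [hB.closure_eq])
  exact h1.union h2

lemma curveMap_piece {d n : ℕ} (P : Fin (n+1) → Euc d) (hn : n ≠ 0) (k : ℕ) (hk : k < n) :
    ∀ t ∈ Icc ((k:ℝ)/n) (((k:ℝ)+1)/n),
      curveMap P t = (1 - (t*(n:ℝ) - (k:ℝ))) • P ⟨k, by omega⟩ + (t*(n:ℝ) - (k:ℝ)) • P ⟨k+1, by omega⟩ := by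
  intro t ht
  have hn' : (0:ℝ) < n := Nat.cast_pos.mpr (Nat.pos_of_ne_zero hn)
  have h1 : (k:ℝ) ≤ t*n := (div_le_iff₀ hn').mp ht.1
  have h2 : t*n ≤ (k:ℝ)+1 := (le_div_iff₀ hn').mp ht.2
  have htn0 : 0 ≤ t * (n:ℝ) := le_trans (Nat.cast_nonneg k) h1
  rcases lt_or_eq_of_le h2 with h2' | h2'
  · have hfl : ⌊t*(n:ℝ)⌋₊ = k := by
      rw [Nat.floor_eq_iff htn0]
      exact ⟨h1, by linarith⟩
    have hmin : min ⌊t*(n:ℝ)⌋₊ (n-1) = k := by rw [hfl]; omega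
    rw [curveMap, dif_neg hn]
    simp only [hmin]
  · have hfl : t*(n:ℝ) = ((k+1 : ℕ) : ℝ) := by push_cast; linarith
    have hfl2 : ⌊t*(n:ℝ)⌋₊ = k+1 := by rw [hfl, Nat.floor_natCast]
    rw [curveMap, dif_neg hn]
    by_cases hk1 : k + 1 ≤ n - 1
    · have hmin : min ⌊t*(n:ℝ)⌋₊ (n-1) = k+1 := by rw [hfl2]; omega
      simp only [hmin]
      have e1 : t*(n:ℝ) - ((k+1:ℕ):ℝ) = 0 := by rw [hfl]; ring
      have e2 : t*(n:ℝ) - (k:ℝ) = 1 := by rw [hfl]; push_cast; ring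
      rw [e1, e2]
      simp
    · have hmin : min ⌊t*(n:ℝ)⌋₊ (n-1) = k := by rw [hfl2]; omega
      simp only [hmin]

lemma curveMap_contOn {d n : ℕ} (P : Fin (n+1) → Euc d) :
    ContinuousOn (curveMap P) (Icc 0 1) := by
  by_cases hn : n = 0
  · exact continuousOn_const.congr fun x _ => by rw [curveMap, dif_pos hn]
  · have hn' : (0:ℝ) < n := Nat.cast_pos.mpr (Nat.pos_of_ne_zero hn)
    have key : ∀ k : ℕ, k ≤ n → ContinuousOn (curveMap P) (Icc 0 ((k:ℝ)/n)) := by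
      intro k
      induction k with
      | zero =>
        intro _
        simp only [Nat.cast_zero, zero_div, Icc_self]
        exact continuousOn_singleton _ _
      | succ k ih =>
        intro hk
        have hkn : k < n := by omega
        have hpiece : ContinuousOn (curveMap P) (Icc ((k:ℝ)/n) (((k:ℝ)+1)/n)) := by
          have hcont : Continuous fun t : ℝ =>
              (1 - (t*(n:ℝ) - (k:ℝ))) • P ⟨k, by omega⟩ + (t*(n:ℝ) - (k:ℝ)) • P ⟨k+1, by omega⟩ := by
            fun_prop
          exact hcont.continuousOn.congr (curveMap_piece P hn k hkn)
        have hsplit : Icc (0:ℝ) (((k:ℝ)+1)/n) = Icc 0 ((k:ℝ)/n) ∪ Icc ((k:ℝ)/n) (((k:ℝ)+1)/n) :=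
          (Icc_union_Icc_eq_Icc (by positivity) ((div_le_div_iff_of_pos_right hn').mpr (by linarith))).symm
        have : ContinuousOn (curveMap P) (Icc (0:ℝ) (((k:ℝ)+1)/n)) := by
          rw [hsplit]
          exact glue_closed isClosed_Icc isClosed_Icc (ih (by omega)) hpiece
        simpa [Nat.cast_succ] using this
    have := key n le_rfl
    rwa [div_self (ne_of_gt hn')] at this

lemma locusStart_mono {d n : ℕ} (P : Fin (n + 1) → Euc d) (lam s : ℝ) {Δ Δ' : ℝ}
    (h : Δ ≤ Δ') : locusStart P lam Δ s ⊆ locusStart P lam Δ' s := by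
  rintro q ⟨p, t, ht, h1, h2⟩
  exact ⟨p, t, ht, h1, h2.trans h⟩

theorem locusStart_subset_ball_aux (d n : ℕ) (P : Fin (n + 1) → Euc d) (lam Δ s : ℝ)
    (hlam : 0 ≤ lam) (hΔ : 0 < Δ) (hs : s ∈ Icc (0 : ℝ) 1) :
    ∃ pstar : Euc d, locusStart P lam Δ s ⊆ closedBall pstar (5 * Δ) := by
  by_cases hlam4 : lam ≤ 4*Δ
  · refine ⟨curveMap P s, ?_⟩
    rintro q ⟨p, t, ht, hpq, hF⟩
    have h1 : dist (curveMap P s) p ≤ Δ := (frechet_start P hs.1 ht.1 ht.2 p q).trans hF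
    rw [mem_closedBall]
    calc dist q (curveMap P s) ≤ dist q p + dist p (curveMap P s) := dist_triangle _ _ _
      _ ≤ lam + Δ := by rw [dist_comm q p, hpq]; linarith [dist_comm p (curveMap P s) ▸ h1]
      _ ≤ 5 * Δ := by linarith
  · push_neg at hlam4
    have hlam0 : 0 < lam := by linarith
    by_cases hne : (locusStart P lam Δ s).Nonempty
    swap
    · exact ⟨0, fun q hq => absurd ⟨q, hq⟩ hne⟩
    set T : Set ℝ := {t : ℝ | t ∈ Icc s 1 ∧ ∃ p q : Euc d, dist p q = lam ∧
      frechetDist (subcurve (curveMap P) s t) (seg p q) ≤ Δ} with hT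
    obtain ⟨q₁, p₁, t₁, ht₁, hpq₁, hF₁⟩ := hne
    have hTne : T.Nonempty := ⟨t₁, ht₁, p₁, q₁, hpq₁, hF₁⟩
    have hTbdd : BddAbove T := ⟨1, fun t ht => ht.1.2⟩
    set ts : ℝ := sSup T with hts
    have hts1 : ts ≤ 1 := csSup_le hTne fun t ht => ht.1.2
    have hsts : s ≤ ts := le_trans ht₁.1 (le_csSup hTbdd ⟨ht₁, p₁, q₁, hpq₁, hF₁⟩)
    have htsIcc : ts ∈ Icc (0:ℝ) 1 := ⟨le_trans hs.1 hsts, hts1⟩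
    have hcont := curveMap_contOn P ts htsIcc
    rw [Metric.continuousWithinAt_iff] at hcont
    obtain ⟨δ, hδpos, hδ⟩ := hcont (Δ/2) (by linarith)
    obtain ⟨t₀, hT₀, ht₀gt⟩ := exists_lt_of_lt_csSup hTne (show ts - δ < ts by linarith)
    obtain ⟨ht₀, p₀, q₀, hpq₀, hF₀⟩ := hT₀
    have ht₀le : t₀ ≤ ts := le_csSup hTbdd ⟨ht₀, p₀, q₀, hpq₀, hF₀⟩
    -- center
    set vc : ℝ := 1 - 2*Δ/lam with hvc
    set c : Euc d := seg p₀ q₀ vc with hc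
    have hvc1 : vc ≤ 1 := by
      have h0 : 0 ≤ 2*Δ/lam := by positivity
      rw [hvc]; linarith
    have hcq₀ : dist c q₀ = 2*Δ := by
      rw [hc, dist_seg_right p₀ q₀ hvc1, hpq₀, hvc]
      field_simp
      ring
    have hp₀s : dist (curveMap P s) p₀ ≤ Δ := (frechet_start P hs.1 ht₀.1 ht₀.2 p₀ q₀).trans hF₀
    have hq₀t₀ : dist (curveMap P t₀) q₀ ≤ Δ := (frechet_end P hs.1 ht₀.1 ht₀.2 p₀ q₀).trans hF₀
    refine ⟨c, ?_⟩
    rintro q ⟨p, t, ht, hpq, hF⟩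
    have hps : dist (curveMap P s) p ≤ Δ := (frechet_start P hs.1 ht.1 ht.2 p q).trans hF
    have hqt : dist (curveMap P t) q ≤ Δ := (frechet_end P hs.1 ht.1 ht.2 p q).trans hF
    rw [mem_closedBall]
    by_cases hcase : t ≤ t₀
    · have h4 : dist q c ≤ 4*Δ := by
        apply le_of_forall_pos_le_add
        intro ε hε
        obtain ⟨v, hv, hx⟩ := frechet_mid P hs.1 ht₀.1 ht₀.2 p₀ q₀
          (show t ∈ Icc s t₀ from ⟨ht.1, hcase⟩) (half_pos hε)
        set x := seg p₀ q₀ v with hxdef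
        have hxQ : dist (curveMap P t) x ≤ Δ + ε/2 := hx.trans (by linarith)
        have hqx : dist q x ≤ 2*Δ + ε/2 := by
          calc dist q x ≤ dist q (curveMap P t) + dist (curveMap P t) x := dist_triangle _ _ _
            _ ≤ 2*Δ + ε/2 := by rw [dist_comm q (curveMap P t)]; linarith
        have hp₀q : lam - 2*Δ ≤ dist p₀ q := by
          have h4 := dist_triangle4 p (curveMap P s) p₀ q
          rw [dist_comm p (curveMap P s)] at h4
          rw [hpq] at h4
          linarith
        have hp₀x : dist p₀ x = v * lam := by
          rw [hxdef, ← hpq₀]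
          exact dist_seg_left p₀ q₀ hv.1
        have h1 : lam - 4*Δ - ε/2 ≤ v * lam := by
          have htr := dist_triangle p₀ x q
          rw [hp₀x] at htr
          rw [dist_comm x q] at htr
          linarith
        have hvclam : vc * lam = lam - 2*Δ := by rw [hvc]; field_simp
        have hxc : dist x c ≤ 2*Δ + ε/2 := by
          rw [hxdef, hc, dist_seg_seg, hpq₀]
          have hvl : v * lam ≤ lam := by nlinarith [hv.2]
          have habs : |v - vc| * lam = |v * lam - vc * lam| := by
            rw [← sub_mul, abs_mul, abs_of_pos hlam0]
          rw [habs, hvclam]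
          exact abs_le.mpr ⟨by linarith, by linarith⟩
        calc dist q c ≤ dist q x + dist x c := dist_triangle _ _ _
          _ ≤ 4*Δ + ε := by linarith
      linarith
    · push_neg at hcase
      have htT : t ∈ T := ⟨ht, p, q, hpq, hF⟩
      have htle : t ≤ ts := le_csSup hTbdd htT
      have htIcc : t ∈ Icc (0:ℝ) 1 := ⟨le_trans hs.1 ht.1, ht.2⟩
      have ht₀Icc : t₀ ∈ Icc (0:ℝ) 1 := ⟨le_trans hs.1 ht₀.1, ht₀.2⟩
      have hd1 : dist (curveMap P t) (curveMap P ts) < Δ/2 := by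
        apply hδ htIcc
        rw [Real.dist_eq, abs_of_nonpos (by linarith)]
        linarith
      have hd2 : dist (curveMap P t₀) (curveMap P ts) < Δ/2 := by
        apply hδ ht₀Icc
        rw [Real.dist_eq, abs_of_nonpos (by linarith)]
        linarith
      have hdt : dist (curveMap P t) (curveMap P t₀) < Δ := by
        calc dist (curveMap P t) (curveMap P t₀)
            ≤ dist (curveMap P t) (curveMap P ts) + dist (curveMap P ts) (curveMap P t₀) :=
            dist_triangle _ _ _
          _ < Δ := by rw [dist_comm (curveMap P ts) (curveMap P t₀)]; linarith
      calc dist q c ≤ dist q (curveMap P t) + dist (curveMap P t) (curveMap P t₀)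
            + dist (curveMap P t₀) c := dist_triangle4 _ _ _ _
        _ ≤ dist q (curveMap P t) + dist (curveMap P t) (curveMap P t₀)
            + (dist (curveMap P t₀) q₀ + dist q₀ c) := by
            linarith [dist_triangle (curveMap P t₀) q₀ c]
        _ ≤ 5 * Δ := by
            rw [dist_comm q (curveMap P t), dist_comm q₀ c]
            linarith


/-- Lemma 3.7 of the paper. For every polygonal curve `P`, `λ ≥ 0`,
`Δ ≥ 0` and `s ∈ [0,1]`, the set `L_{λ,Δ}(P,s)` is contained in a single closed ball of
radius `5Δ`. -/
theorem locusStart_subset_ball (d n : ℕ) (P : Fin (n + 1) → Euc d) (lam Δ s : ℝ)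
    (hlam : 0 ≤ lam) (hΔ : 0 ≤ Δ) (hs : s ∈ Icc (0 : ℝ) 1) :
    ∃ pstar : Euc d, locusStart P lam Δ s ⊆ closedBall pstar (5 * Δ) := by
  rcases eq_or_lt_of_le hΔ with h | h
  · subst h
    by_cases hne : (locusStart P lam 0 s).Nonempty
    · obtain ⟨q₀, hq₀⟩ := hne
      refine ⟨q₀, fun q hq => ?_⟩
      rw [mem_closedBall, mul_zero]
      apply le_of_forall_pos_le_add
      intro ε hε
      obtain ⟨c, hc⟩ := locusStart_subset_ball_aux d n P lam (ε/10) s hlam (by linarith) hs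
      have hm : locusStart P lam 0 s ⊆ locusStart P lam (ε/10) s :=
        locusStart_mono P lam s (by linarith)
      have h1 := hc (hm hq)
      have h2 := hc (hm hq₀)
      rw [mem_closedBall] at h1 h2
      calc dist q q₀ ≤ dist q c + dist c q₀ := dist_triangle _ _ _
        _ ≤ 0 + ε := by rw [dist_comm c q₀]; linarith
    · exact ⟨0, fun q hq => absurd ⟨q, hq⟩ hne⟩
  · exact locusStart_subset_ball_aux d n P lam Δ s hlam h hs
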